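/- Let (Λ_{j,k})_{(j,k)∈Q} be positive quasi-errors that are linearly convergent: Λ_{j',k'} ≤ C_lin q_lin^{|(j',k')|−|(j,k)|} Λ_{j,k} for all (j',k') ≥ (j,k) in Q, with C_lin ≥ 1, 0 < q_lin < 1, and total-iteration counter |·|. Assume sup_{(j,k)∈Q} (#T_j)^s Λ_{j,k} < ∞ for some s > 0, and (#T_j) log²(1+#T_j) ≤ C_δ (#T_j)^{1+δ} for every δ > 0. Then for every 0 < ε < s, sup_{(j',k')∈Q} [Σ_{(j,k)≤(j',k')} (#T_j) log²(1+#T_j)]^{s−ε} Λ_{j',k'} < ∞. -/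

import Mathlib

lemma geom_aux {r : ℝ} (h0 : 0 ≤ r) (h1 : r < 1) (n : ℕ) :
    ∑ i ∈ Finset.range n, r ^ i ≤ (1 - r)⁻¹ := by
  have hne : r ≠ 1 := ne_of_lt h1
  rw [geom_sum_eq hne]
  have h1r : 0 < 1 - r := by linarith
  have heq : (r ^ n - 1) / (r - 1) = (1 - r ^ n) / (1 - r) := by
    rw [div_eq_div_iff (by linarith) (by linarith)]; ring
  rw [heq, inv_eq_one_div]
  exact (div_le_div_iff_of_pos_right h1r).mpr (by nlinarith [pow_nonneg h0 n])

/-- Corollary 5 (almost optimal computational complexity): if the quasi-errors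
`Λ_{j,k}` are linearly convergent with respect to the total PCG-iteration counter
`cnt` and converge at rate `s` with respect to the number of elements `#T_j`, then
for every `0 < ε < s` they converge at rate `s − ε` with respect to the cumulative
computational costs `Σ_{(j,k)≤(j',k')} (#T_j) log²(1+#T_j)`. -/
theorem stmt_17 (Clin qlin s : ℝ) (hC : 1 ≤ Clin) (hq0 : 0 < qlin) (hq1 : qlin < 1)
    (hs : 0 < s)
    (Q : Set (ℕ × ℕ)) (cnt : ℕ × ℕ → ℕ) (Λ : ℕ × ℕ → ℝ) (T : ℕ → ℕ)
    (ord : ℕ × ℕ → ℕ × ℕ → Prop)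
    -- lexicographic ordering on the index set
    (hord : ∀ p r : ℕ × ℕ, ord p r ↔ p.1 < r.1 ∨ (p.1 = r.1 ∧ p.2 ≤ r.2))
    (hT : ∀ j : ℕ, 1 ≤ T j)
    (hΛpos : ∀ p ∈ Q, 0 < Λ p)
    -- linear convergence (Theorem 4(b))
    (hlin : ∀ p ∈ Q, ∀ r ∈ Q, ord p r → Λ r ≤ Clin * qlin ^ (cnt r - cnt p) * Λ p)
    (hcnt : ∀ p ∈ Q, ∀ r ∈ Q, ord p r → cnt p ≤ cnt r)
    (hinj : Set.InjOn cnt Q)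
    (hfin : ∀ p ∈ Q, Set.Finite {r ∈ Q | ord r p})
    -- rate s with respect to the degrees of freedom (Theorem 4(c))
    (hsup : ∃ M : ℝ, ∀ p ∈ Q, ((T p.1 : ℝ)) ^ s * Λ p ≤ M)
    -- `N log²(1+N) ≤ C_δ N^{1+δ}` for every `δ > 0`
    (hlog : ∀ δ : ℝ, 0 < δ → ∃ Cδ : ℝ, ∀ j : ℕ,
      (T j : ℝ) * (Real.log (1 + (T j : ℝ))) ^ 2 ≤ Cδ * (T j : ℝ) ^ (1 + δ)) :
    ∀ ε : ℝ, 0 < ε → ε < s →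
      ∃ M : ℝ, ∀ p' : ℕ × ℕ, ∀ hp' : p' ∈ Q,
        (∑ p ∈ (hfin p' hp').toFinset,
            (T p.1 : ℝ) * (Real.log (1 + (T p.1 : ℝ))) ^ 2) ^ (s - ε) * Λ p' ≤ M := by
  intro ε hε0 hεs
  obtain ⟨M0, hM0⟩ := hsup
  set t : ℝ := s - ε with ht_def
  have ht : 0 < t := by simp [ht_def]; linarith
  have ht' : t ≠ 0 := ne_of_gt ht
  set δ : ℝ := s / t - 1 with hδ_def
  have hδpos : 0 < δ := by
    have : 1 < s / t := (one_lt_div ht).mpr (by simp [ht_def]; linarith)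
    simpa [hδ_def] using sub_pos.mpr this
  obtain ⟨Cδ0, hCδ0⟩ := hlog δ hδpos
  set Cδ : ℝ := max Cδ0 1 with hCδ_def
  have hCδ1 : 1 ≤ Cδ := le_max_right _ _
  set M : ℝ := max M0 1 with hM_def
  have hM1 : 1 ≤ M := le_max_right _ _
  -- the geometric ratio
  set r : ℝ := qlin ^ (1 / t) with hr_def
  have hr0 : 0 < r := Real.rpow_pos_of_pos hq0 _
  have hr1 : r < 1 := by
    apply Real.rpow_lt_one (le_of_lt hq0) hq1
    positivity
  have h1r : 0 < 1 - r := by linarith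
  refine ⟨(Cδ * (1 - r)⁻¹) ^ t * (M * Clin), ?_⟩
  intro p' hp'
  set F := (hfin p' hp').toFinset with hF_def
  have hΛ' : 0 < Λ p' := hΛpos p' hp'
  -- per-term bound
  have hterm : ∀ p ∈ F,
      (T p.1 : ℝ) * (Real.log (1 + (T p.1 : ℝ))) ^ 2 ≤
        Cδ * (M * Clin / Λ p') ^ (1 / t) * r ^ (cnt p' - cnt p) := by
    intro p hp
    rw [hF_def, Set.Finite.mem_toFinset] at hp
    obtain ⟨hpQ, hpord⟩ := hp
    have hΛp : 0 < Λ p := hΛpos p hpQ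
    have hT1 : (1 : ℝ) ≤ (T p.1 : ℝ) := by exact_mod_cast hT p.1
    have hT0 : (0 : ℝ) < (T p.1 : ℝ) := lt_of_lt_of_le one_pos hT1
    -- step 1: bound by Cδ * T^(s/t)
    have h1 : (T p.1 : ℝ) * (Real.log (1 + (T p.1 : ℝ))) ^ 2 ≤
        Cδ * (T p.1 : ℝ) ^ (s / t) := by
      have := hCδ0 p.1
      have he : (1 : ℝ) + δ = s / t := by rw [hδ_def]; ring
      rw [he] at this
      refine this.trans ?_
      apply mul_le_mul_of_nonneg_right (le_max_left _ _)
      positivity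
    refine h1.trans ?_
    -- step 2: T^s ≤ M * Clin * q^d / Λ p'
    have h2 : (T p.1 : ℝ) ^ s ≤ M * Clin * qlin ^ (cnt p' - cnt p) / Λ p' := by
      have hA : (T p.1 : ℝ) ^ s * Λ p ≤ M := (hM0 p hpQ).trans (le_max_left _ _)
      have hB : Λ p' ≤ Clin * qlin ^ (cnt p' - cnt p) * Λ p := hlin p hpQ p' hp' hpord
      have hq : (0:ℝ) < qlin ^ (cnt p' - cnt p) := pow_pos hq0 _
      rw [le_div_iff₀ hΛ']
      calc (T p.1 : ℝ) ^ s * Λ p' ≤ (T p.1 : ℝ) ^ s * (Clin * qlin ^ (cnt p' - cnt p) * Λ p) :=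
            mul_le_mul_of_nonneg_left hB (Real.rpow_nonneg hT0.le s)
        _ = Clin * qlin ^ (cnt p' - cnt p) * ((T p.1 : ℝ) ^ s * Λ p) := by ring
        _ ≤ Clin * qlin ^ (cnt p' - cnt p) * M := mul_le_mul_of_nonneg_left hA (by positivity)
        _ = M * Clin * qlin ^ (cnt p' - cnt p) := by ring
    -- step 3
    have hq : (0:ℝ) < qlin ^ (cnt p' - cnt p) := pow_pos hq0 _
    have h3 : (T p.1 : ℝ) ^ (s / t) ≤ (M * Clin / Λ p') ^ (1 / t) * r ^ (cnt p' - cnt p) := by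
      have e1 : (T p.1 : ℝ) ^ (s / t) = ((T p.1 : ℝ) ^ s) ^ (1 / t) := by
        rw [← Real.rpow_mul hT0.le]; ring_nf
      have e2 : ((T p.1 : ℝ) ^ s) ^ (1 / t) ≤
          (M * Clin * qlin ^ (cnt p' - cnt p) / Λ p') ^ (1 / t) :=
        Real.rpow_le_rpow (Real.rpow_nonneg hT0.le s) h2 (by positivity)
      have e3 : (M * Clin * qlin ^ (cnt p' - cnt p) / Λ p') ^ (1 / t)
          = (M * Clin / Λ p') ^ (1 / t) * r ^ (cnt p' - cnt p) := by
        have hb : (0:ℝ) ≤ M * Clin / Λ p' := by positivity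
        have hsplit : M * Clin * qlin ^ (cnt p' - cnt p) / Λ p'
            = (M * Clin / Λ p') * qlin ^ (cnt p' - cnt p) := by ring
        rw [hsplit, Real.mul_rpow hb hq.le]
        congr 1
        rw [← Real.rpow_natCast qlin (cnt p' - cnt p), ← Real.rpow_mul hq0.le, mul_comm,
          Real.rpow_mul hq0.le, Real.rpow_natCast]
      rw [e1, ← e3]; exact e2
    calc Cδ * (T p.1 : ℝ) ^ (s / t) ≤
          Cδ * ((M * Clin / Λ p') ^ (1 / t) * r ^ (cnt p' - cnt p)) :=
        mul_le_mul_of_nonneg_left h3 (by linarith)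
      _ = Cδ * (M * Clin / Λ p') ^ (1 / t) * r ^ (cnt p' - cnt p) := by ring
  -- bound the sum of geometric terms
  have hgeo : ∑ p ∈ F, r ^ (cnt p' - cnt p) ≤ (1 - r)⁻¹ := by
    have himg : ∑ p ∈ F, r ^ (cnt p' - cnt p)
        = ∑ n ∈ F.image (fun p => cnt p' - cnt p), r ^ n := by
      rw [Finset.sum_image]
      intro p1 h1 p2 h2 he
      simp only [Finset.mem_coe, hF_def, Set.Finite.mem_toFinset, Set.mem_setOf_eq] at h1 h2
      have c1 : cnt p1 ≤ cnt p' := hcnt p1 h1.1 p' hp' h1.2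
      have c2 : cnt p2 ≤ cnt p' := hcnt p2 h2.1 p' hp' h2.2
      simp only at he
      exact hinj h1.1 h2.1 (by omega)
    rw [himg]
    calc ∑ n ∈ F.image (fun p => cnt p' - cnt p), r ^ n
        ≤ ∑ n ∈ Finset.range (cnt p' + 1), r ^ n := by
          apply Finset.sum_le_sum_of_subset_of_nonneg
          · intro n hn
            simp only [Finset.mem_image] at hn
            obtain ⟨p, _, hpn⟩ := hn
            simp only [Finset.mem_range]; omega
          · intro n _ _; positivity
      _ ≤ (1 - r)⁻¹ := geom_aux hr0.le hr1 (cnt p' + 1)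
  -- combine
  set S : ℝ := ∑ p ∈ F, (T p.1 : ℝ) * (Real.log (1 + (T p.1 : ℝ))) ^ 2 with hS_def
  have hS0 : 0 ≤ S := by
    apply Finset.sum_nonneg
    intro p _
    have hT1 : (1 : ℝ) ≤ (T p.1 : ℝ) := by exact_mod_cast hT p.1
    have : (0:ℝ) ≤ Real.log (1 + (T p.1 : ℝ)) := Real.log_nonneg (by linarith)
    positivity
  have hSK : S ≤ Cδ * (1 - r)⁻¹ * (M * Clin / Λ p') ^ (1 / t) := by
    calc S ≤ ∑ p ∈ F, Cδ * (M * Clin / Λ p') ^ (1 / t) * r ^ (cnt p' - cnt p) :=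
          Finset.sum_le_sum hterm
      _ = Cδ * (M * Clin / Λ p') ^ (1 / t) * ∑ p ∈ F, r ^ (cnt p' - cnt p) := by
          rw [Finset.mul_sum]
      _ ≤ Cδ * (M * Clin / Λ p') ^ (1 / t) * (1 - r)⁻¹ := by
          apply mul_le_mul_of_nonneg_left hgeo
          have : (0:ℝ) < M * Clin / Λ p' := by positivity
          positivity
      _ = Cδ * (1 - r)⁻¹ * (M * Clin / Λ p') ^ (1 / t) := by ring
  -- raise to the power t
  have hK0 : (0:ℝ) ≤ Cδ * (1 - r)⁻¹ := by positivity
  have hbase : (0:ℝ) < M * Clin / Λ p' := by positivity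
  have hpow : S ^ t ≤ (Cδ * (1 - r)⁻¹) ^ t * (M * Clin / Λ p') := by
    calc S ^ t ≤ (Cδ * (1 - r)⁻¹ * (M * Clin / Λ p') ^ (1 / t)) ^ t :=
          Real.rpow_le_rpow hS0 hSK ht.le
      _ = (Cδ * (1 - r)⁻¹) ^ t * ((M * Clin / Λ p') ^ (1 / t)) ^ t := by
          rw [Real.mul_rpow hK0 (Real.rpow_nonneg hbase.le _)]
      _ = (Cδ * (1 - r)⁻¹) ^ t * (M * Clin / Λ p') := by
          rw [← Real.rpow_mul hbase.le, one_div_mul_cancel ht', Real.rpow_one]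
  calc S ^ t * Λ p' ≤ (Cδ * (1 - r)⁻¹) ^ t * (M * Clin / Λ p') * Λ p' :=
        mul_le_mul_of_nonneg_right hpow hΛ'.le
    _ = (Cδ * (1 - r)⁻¹) ^ t * (M * Clin) := by
        field_simp
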